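/- arXiv:1601.00809 — 2 statements merged into one kernel-verified Lean document; each statement's English description precedes it below -/
import Mathlib

section
/- Let (K, K^∨) be a pair of dual reflexive Gorenstein cones of index k with deg^∨ = t_1 + ⋯ + t_k where each t_i ∈ K^∨_(1), and set Δ^∨ = {y ∈ K^∨ : ⟨deg, y⟩ = 1}. Then the set of lattice points of Δ^∨ that lie in the real span of {t_1, …, t_k} is exactly {t_1, …, t_k}. -/
open scoped BigOperators Pointwise

noncomputable section

/-- The standard pairing `⟨x, y⟩ = ∑ i, x i * y i` on `ℝ^d`. -/
def pairR {d : ℕ} (x y : Fin d → ℝ) : ℝ := ∑ i, x i * y i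

/-- A point of `ℝ^d` is a lattice point if all of its coordinates are integers. -/
def IsLatticePoint {d : ℕ} (x : Fin d → ℝ) : Prop := ∀ i, ∃ z : ℤ, x i = (z : ℝ)

/-- The dual cone `K^∨ = {y : ⟨x, y⟩ ≥ 0 for all x ∈ K}`. -/
def dualCone {d : ℕ} (K : Set (Fin d → ℝ)) : Set (Fin d → ℝ) :=
  { y | ∀ x ∈ K, 0 ≤ pairR x y }

/-- A Gorenstein cone with degree element `n` (a lattice point): the set of all
nonnegative real linear combinations of a finite set of lattice points, each pairing
to `1` with `n`, such that `K ∩ (−K) = {0}` and `span K = ℝ^d`. -/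
def IsGorensteinCone {d : ℕ} (K : Set (Fin d → ℝ)) (n : Fin d → ℝ) : Prop :=
  IsLatticePoint n ∧
  (∃ S : Finset (Fin d → ℝ),
      (∀ v ∈ S, IsLatticePoint v ∧ pairR v n = 1) ∧
      K = { x | ∃ c : (Fin d → ℝ) → ℝ, (∀ v, 0 ≤ c v) ∧ x = ∑ v ∈ S, c v • v }) ∧
  K ∩ (-K) = {0} ∧
  Submodule.span ℝ K = ⊤

/-- `K_(1)`: the lattice points `m ∈ K` with `⟨m, deg^∨⟩ = 1`. -/
def Kone {d : ℕ} (K : Set (Fin d → ℝ)) (degVee : Fin d → ℝ) : Set (Fin d → ℝ) :=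
  { m | IsLatticePoint m ∧ m ∈ K ∧ pairR m degVee = 1 }

/-- `K^∨_(1)`: the lattice points `n ∈ K^∨` with `⟨deg, n⟩ = 1`. -/
def KvOne {d : ℕ} (K : Set (Fin d → ℝ)) (deg : Fin d → ℝ) : Set (Fin d → ℝ) :=
  { n | IsLatticePoint n ∧ n ∈ dualCone K ∧ pairR deg n = 1 }

lemma pairR_sum_smul_right {d k : ℕ} (x : Fin d → ℝ) (c : Fin k → ℝ) (t : Fin k → Fin d → ℝ) :
    pairR x (∑ i, c i • t i) = ∑ i, c i * pairR x (t i) := by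
  simp only [pairR, Finset.sum_apply, Pi.smul_apply, smul_eq_mul, Finset.mul_sum]
  rw [Finset.sum_comm]
  exact Finset.sum_congr rfl fun i _ => Finset.sum_congr rfl fun j _ => by ring

lemma pairR_sum_right {d k : ℕ} (x : Fin d → ℝ) (t : Fin k → Fin d → ℝ) :
    pairR x (∑ i, t i) = ∑ i, pairR x (t i) := by
  have := pairR_sum_smul_right x (fun _ => (1:ℝ)) t
  simpa using this

def pairLM {d : ℕ} (y : Fin d → ℝ) : (Fin d → ℝ) →ₗ[ℝ] ℝ where
  toFun x := pairR x y
  map_add' a b := by simp [pairR, add_mul, Finset.sum_add_distrib]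
  map_smul' r a := by simp [pairR, Finset.mul_sum, mul_assoc]

lemma pairR_int {d : ℕ} {x y : Fin d → ℝ} (hx : IsLatticePoint x) (hy : IsLatticePoint y) :
    ∃ z : ℤ, pairR x y = (z : ℝ) := by
  choose zx hzx using hx
  choose zy hzy using hy
  refine ⟨∑ i, zx i * zy i, ?_⟩
  rw [pairR]
  push_cast
  exact Finset.sum_congr rfl fun i _ => by rw [hzx, hzy]

lemma nat_sum_one {k : ℕ} (n : Fin k → ℕ) (h : ∑ i, n i = 1) :
    ∃ i, n i = 1 ∧ ∀ j, j ≠ i → n j = 0 := by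
  have h1 : ∃ i, n i ≠ 0 := by
    by_contra h'
    push_neg at h'
    simp [h'] at h
  obtain ⟨i, hi⟩ := h1
  have hsp : n i + ∑ j ∈ Finset.univ.erase i, n j = 1 := by
    rw [Finset.add_sum_erase _ n (Finset.mem_univ i)]; exact h
  have hni : n i = 1 := by omega
  have hrest : ∑ j ∈ Finset.univ.erase i, n j = 0 := by omega
  refine ⟨i, hni, fun j hj => ?_⟩
  have := Finset.sum_eq_zero_iff.1 hrest j (Finset.mem_erase.2 ⟨hj, Finset.mem_univ j⟩)
  exact this

/-- With `deg^∨ = t_1 + ⋯ + t_k`, `t_i ∈ K^∨_(1)`, the set of lattice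
points of `Δ^∨ = {y ∈ K^∨ : ⟨deg, y⟩ = 1}` lying in the real span of `{t_1, …, t_k}`
is exactly `{t_1, …, t_k}`. -/
theorem stmt5 {d k : ℕ} (K : Set (Fin d → ℝ)) (deg degVee : Fin d → ℝ)
    (hK : IsGorensteinCone K degVee) (hKv : IsGorensteinCone (dualCone K) deg)
    (hk : pairR deg degVee = (k : ℝ))
    (t : Fin k → (Fin d → ℝ)) (ht : ∀ i, t i ∈ KvOne K deg)
    (hdec : degVee = ∑ i, t i) :
    { y : Fin d → ℝ | IsLatticePoint y ∧ y ∈ dualCone K ∧ pairR deg y = 1 ∧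
        y ∈ Submodule.span ℝ (Set.range t) } = Set.range t := by
  classical
  obtain ⟨hnlat, ⟨S, hS, hKeq⟩, hpoint, hspan⟩ := hK
  -- every element of S lies in K
  have hSK : ∀ m ∈ S, m ∈ K := by
    intro m hm
    rw [hKeq]
    refine ⟨fun v => if v = m then 1 else 0, fun v => by positivity, ?_⟩
    simp only [ite_smul, one_smul, zero_smul]
    rw [Finset.sum_ite_eq' S m (fun v => v)]
    simp [hm]
  -- K ⊆ span S, hence span S = ⊤
  have hKsub : K ⊆ (Submodule.span ℝ (S : Set (Fin d → ℝ)) : Set (Fin d → ℝ)) := by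
    intro x hx
    rw [hKeq] at hx
    obtain ⟨cc, hcc0, rfl⟩ := hx
    exact Submodule.sum_mem _ fun v hv => Submodule.smul_mem _ _ (Submodule.subset_span hv)
  have hspanS : Submodule.span ℝ (S : Set (Fin d → ℝ)) = ⊤ := by
    refine top_unique ?_
    rw [← hspan]
    exact Submodule.span_le.2 hKsub
  -- for each m ∈ S : there is a unique i with ⟨m, t i⟩ = 1, all others 0
  have hm_main : ∀ m ∈ S, ∃ i, pairR m (t i) = 1 ∧ ∀ j, j ≠ i → pairR m (t j) = 0 := by
    intro m hm
    have hmlat := (hS m hm).1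
    have hnat : ∀ i : Fin k, ∃ n : ℕ, pairR m (t i) = (n : ℝ) := by
      intro i
      obtain ⟨z, hz⟩ := pairR_int hmlat (ht i).1
      have h0 : (0:ℝ) ≤ (z : ℝ) := hz ▸ (ht i).2.1 m (hSK m hm)
      have h0' : (0:ℤ) ≤ z := by exact_mod_cast h0
      exact ⟨z.toNat, by rw [hz]; exact_mod_cast (Int.toNat_of_nonneg h0').symm⟩
    choose a ha using hnat
    have hsum : ∑ i, pairR m (t i) = 1 := by
      rw [← pairR_sum_right, ← hdec]
      exact (hS m hm).2
    have hsumn : ∑ i, a i = 1 := by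
      have : ((∑ i, a i : ℕ) : ℝ) = 1 := by
        push_cast
        rw [← hsum]
        exact Finset.sum_congr rfl fun i _ => (ha i).symm
      exact_mod_cast this
    obtain ⟨i, hi1, hi0⟩ := nat_sum_one a hsumn
    exact ⟨i, by rw [ha i, hi1]; norm_num, fun j hj => by rw [ha j, hi0 j hj]; norm_num⟩
  ext y
  simp only [Set.mem_setOf_eq, Set.mem_range]
  constructor
  · rintro ⟨hylat, hyK, hydeg, hyspan⟩
    obtain ⟨c, hc⟩ := (Submodule.mem_span_range_iff_exists_fun ℝ).1 hyspan
    -- ∑ c i = 1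
    have hsumc : ∑ i, c i = 1 := by
      have h1 := pairR_sum_smul_right deg c t
      rw [hc, hydeg] at h1
      have h2 : ∑ i, c i * pairR deg (t i) = ∑ i, c i :=
        Finset.sum_congr rfl fun i _ => by rw [(ht i).2.2, mul_one]
      rw [h2] at h1
      exact h1.symm
    -- value formula : if ⟨m, t i⟩ = 1 and others 0 then ⟨m, y⟩ = c i
    have hval : ∀ m i, pairR m (t i) = 1 → (∀ j, j ≠ i → pairR m (t j) = 0) →
        pairR m y = c i := by
      intro m i h1 h0
      rw [← hc, pairR_sum_smul_right]
      rw [Finset.sum_eq_single i (fun j _ hj => by rw [h0 j hj, mul_zero])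
        (fun h => absurd (Finset.mem_univ i) h), h1, mul_one]
    -- each c i is a nonnegative integer
    have hcnat : ∀ i, ∃ n : ℕ, c i = (n : ℝ) := by
      intro i
      have hex : ∃ m ∈ S, pairR m (t i) = 1 := by
        by_contra h'
        push_neg at h'
        have hzero : ∀ m ∈ S, pairR m (t i) = 0 := by
          intro m hm
          obtain ⟨i0, h1, h0⟩ := hm_main m hm
          rcases eq_or_ne i i0 with rfl | hne
          · exact absurd h1 (h' m hm)
          · exact h0 i hne
        have hker : Submodule.span ℝ (S : Set (Fin d → ℝ)) ≤ LinearMap.ker (pairLM (t i)) := by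
          refine Submodule.span_le.2 fun m hm => ?_
          exact LinearMap.mem_ker.2 (hzero m hm)
        have hdegker : deg ∈ LinearMap.ker (pairLM (t i)) :=
          hker (hspanS ▸ Submodule.mem_top)
        have : pairR deg (t i) = 0 := LinearMap.mem_ker.1 hdegker
        rw [(ht i).2.2] at this
        norm_num at this
      obtain ⟨m, hm, h1⟩ := hex
      obtain ⟨i0, h1', h0⟩ := hm_main m hm
      have hii : i = i0 := by
        by_contra hne
        rw [h0 i hne] at h1
        norm_num at h1
      subst hii
      have hci : c i = pairR m y := (hval m i h1' h0).symm
      obtain ⟨z, hz⟩ := pairR_int (hS m hm).1 hylat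
      have hge : (0:ℝ) ≤ (z:ℝ) := hz ▸ hyK m (hSK m hm)
      have hge' : (0:ℤ) ≤ z := by exact_mod_cast hge
      exact ⟨z.toNat, by rw [hci, hz]; exact_mod_cast (Int.toNat_of_nonneg hge').symm⟩
    choose n hn using hcnat
    have hsumn : ∑ i, n i = 1 := by
      have : ((∑ i, n i : ℕ) : ℝ) = 1 := by
        push_cast
        rw [← hsumc]
        exact Finset.sum_congr rfl fun i _ => (hn i).symm
      exact_mod_cast this
    obtain ⟨i0, hi1, hi0⟩ := nat_sum_one n hsumn
    refine ⟨i0, ?_⟩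
    rw [← hc, Finset.sum_eq_single i0 (fun j _ hj => by
      rw [hn j, hi0 j hj]; simp) (fun h => absurd (Finset.mem_univ i0) h),
      hn i0, hi1]
    norm_num
  · rintro ⟨i, rfl⟩
    exact ⟨(ht i).1, (ht i).2.1, (ht i).2.2, Submodule.subset_span ⟨i, rfl⟩⟩
end
end

section
/- Let (K, K^∨) be a pair of dual reflexive Gorenstein cones of index k with deg^∨ = (1/2)(s_1 + ⋯ + s_{2r}) + t_1 + ⋯ + t_{k−r}, where the s_i, t_j ∈ K^∨_(1) are linearly independent, and let T = {x ∈ K : ⟨x, s_i⟩ = 1 and ⟨x, t_j⟩ = 1 for all i, j} − deg. Then the dilated polytope 2T = {2x : x ∈ T} is the convex hull of a finite set of lattice points (i.e., 2T has lattice vertices). -/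
open scoped BigOperators Pointwise

noncomputable section

def IsInt (x : ℝ) : Prop := ∃ z : ℤ, x = (z : ℝ)

lemma IsInt.add {a b : ℝ} (ha : IsInt a) (hb : IsInt b) : IsInt (a + b) := by
  obtain ⟨z, rfl⟩ := ha; obtain ⟨w, rfl⟩ := hb; exact ⟨z + w, by push_cast; ring⟩

lemma IsInt.mul {a b : ℝ} (ha : IsInt a) (hb : IsInt b) : IsInt (a * b) := by
  obtain ⟨z, rfl⟩ := ha; obtain ⟨w, rfl⟩ := hb; exact ⟨z * w, by push_cast; ring⟩

lemma IsInt.neg {a : ℝ} (ha : IsInt a) : IsInt (-a) := by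
  obtain ⟨z, rfl⟩ := ha; exact ⟨-z, by push_cast; ring⟩

lemma IsInt.sub {a b : ℝ} (ha : IsInt a) (hb : IsInt b) : IsInt (a - b) := by
  obtain ⟨z, rfl⟩ := ha; obtain ⟨w, rfl⟩ := hb; exact ⟨z - w, by push_cast; ring⟩

lemma IsInt.zero : IsInt (0 : ℝ) := ⟨0, by norm_num⟩
lemma IsInt.int (z : ℤ) : IsInt (z : ℝ) := ⟨z, rfl⟩
lemma IsInt.one : IsInt (1 : ℝ) := ⟨1, by norm_num⟩

lemma IsInt.sum {ι : Type*} {f : ι → ℝ} (F : Finset ι) (h : ∀ v ∈ F, IsInt (f v)) :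
    IsInt (∑ v ∈ F, f v) := by
  classical
  induction F using Finset.induction with
  | empty => simpa using IsInt.zero
  | insert _ _ hx ih =>
    rename_i a s
    rw [Finset.sum_insert hx]
    exact (h a (Finset.mem_insert_self a s)).add
      (ih fun v hv => h v (Finset.mem_insert_of_mem hv))

/-- helper: a sum over a finset where only two elements are nonzero -/
lemma sum_eq_add_of_support {ι M : Type*} [AddCommGroup M] [DecidableEq ι] (F : Finset ι)
    (f : ι → M) {i j : ι} (hi : i ∈ F) (hj : j ∈ F) (hij : i ≠ j)
    (h : ∀ v ∈ F, v ≠ i → v ≠ j → f v = 0) : ∑ v ∈ F, f v = f i + f j := by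
  rw [← Finset.sum_erase_add F f hj]
  congr 1
  apply Finset.sum_eq_single_of_mem i (Finset.mem_erase.2 ⟨hij, hi⟩)
  intro b hb hbi
  obtain ⟨hbj, hbF⟩ := Finset.mem_erase.1 hb
  exact h b hbF hbi hbj

set_option maxHeartbeats 2000000 in
/-- Key half-integrality lemma. -/
lemma keyB {ι Row : Type*} [Fintype Row] (n : ℕ) :
    ∀ (F : Finset ι) (N : ι → Row → ℝ) (c : ι → ℝ) (g : Row → ℝ) (x : Row),
    (∀ v ∈ F, (∀ y, IsInt (N v y)) ∧ (∑ y, |N v y|) ≤ 2) →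
    LinearIndependent ℝ (fun v : F => N v.1) →
    ∑ v ∈ F, c v • N v = g →
    (∀ y, (∃ v ∈ F, N v y ≠ 0) → IsInt (g y)) →
    (∃ v ∈ F, N v x ≠ 0) →
    (F.card * (F.card + 1) + (F.filter fun v => N v x ≠ 0).card ≤ n) →
    ∀ v ∈ F, IsInt (2 * c v) := by
  classical
  induction n using Nat.strong_induction_on with
  | _ n IH =>
  intro F N c g x hstruct hindep heq hintg hcov hmeas
  set D := F.filter fun v => N v x ≠ 0 with hD
  have hDne : D.Nonempty := by
    obtain ⟨v, hv, hvx⟩ := hcov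
    exact ⟨v, Finset.mem_filter.2 ⟨hv, hvx⟩⟩
  have hrow : ∀ y : Row, ∑ v ∈ F, c v * N v y = g y := by
    intro y
    have := congrFun heq y
    simpa [Finset.sum_apply] using this
  rcases eq_or_lt_of_le (by exact Finset.card_pos.mpr hDne : 1 ≤ D.card) with hD1 | hD2
  · -- ===================== |D| = 1 case =====================
    obtain ⟨v₀, hv₀⟩ := Finset.card_eq_one.1 hD1.symm
    have hv₀D : v₀ ∈ D := by simp [hv₀]
    have hv₀F : v₀ ∈ F := (Finset.mem_filter.1 hv₀D).1
    have hv₀x : N v₀ x ≠ 0 := (Finset.mem_filter.1 hv₀D).2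
    have honly : ∀ v ∈ F, v ≠ v₀ → N v x = 0 := by
      intro v hv hne
      by_contra hnz
      have : v ∈ D := Finset.mem_filter.2 ⟨hv, hnz⟩
      rw [hv₀] at this
      exact hne (Finset.mem_singleton.1 this)
    have hxa : c v₀ * N v₀ x = g x := by
      rw [← hrow x]
      exact (Finset.sum_eq_single_of_mem (f := fun v => c v * N v x) v₀ hv₀F
        (fun b hb hbne => by show c b * N b x = 0; rw [honly b hb hbne, mul_zero])).symm
    obtain ⟨za, hza⟩ := (hstruct v₀ hv₀F).1 x
    obtain ⟨zg, hzg⟩ := hintg x ⟨v₀, hv₀F, hv₀x⟩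
    have hza0 : za ≠ 0 := by
      intro h; rw [h] at hza; simp at hza; exact hv₀x hza
    have hzabs : |za| ≤ 2 := by
      have h1 : |N v₀ x| ≤ ∑ y, |N v₀ y| :=
        Finset.single_le_sum (f := fun y => |N v₀ y|) (fun y _ => abs_nonneg _)
          (Finset.mem_univ x)
      have h2 := (hstruct v₀ hv₀F).2
      have : |(za : ℝ)| ≤ 2 := by rw [← hza]; linarith
      exact_mod_cast this
    have hmain : c v₀ * (za : ℝ) = zg := by rw [← hza, hxa, hzg]
    have habs12 : za = 1 ∨ za = -1 ∨ za = 2 ∨ za = -2 := by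
      obtain ⟨hl, hr⟩ := abs_le.1 hzabs
      omega
    have hc₀ : IsInt (2 * c v₀) := by
      rcases habs12 with h | h | h | h <;> subst h <;> push_cast at hmain
      · exact ⟨2 * zg, by push_cast; linarith⟩
      · exact ⟨-(2 * zg), by push_cast; linarith⟩
      · exact ⟨zg, by push_cast; linarith⟩
      · exact ⟨-zg, by push_cast; linarith⟩
    -- c v₀ * N v₀ y is an integer away from x
    have hcN : ∀ y, y ≠ x → IsInt (c v₀ * N v₀ y) := by
      intro y hyx
      rcases habs12 with h | h | h | h
      · subst h; push_cast at hmain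
        exact IsInt.mul ⟨zg, by linarith⟩ ((hstruct v₀ hv₀F).1 y)
      · subst h; push_cast at hmain
        exact IsInt.mul ⟨-zg, by push_cast; linarith⟩ ((hstruct v₀ hv₀F).1 y)
      all_goals {
        have habs2 : |N v₀ x| = 2 := by rw [hza]; subst h; norm_num
        have hNy : N v₀ y = 0 := by
          have hsub : ∑ z ∈ ({x, y} : Finset Row), |N v₀ z| ≤ ∑ z, |N v₀ z| :=
            Finset.sum_le_sum_of_subset_of_nonneg (Finset.subset_univ _)
              (fun z _ _ => abs_nonneg _)
          rw [Finset.sum_pair (Ne.symm hyx)] at hsub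
          have h2 := (hstruct v₀ hv₀F).2
          have : |N v₀ y| ≤ 0 := by rw [habs2] at hsub; linarith
          exact abs_eq_zero.1 (le_antisymm this (abs_nonneg _))
        rw [hNy, mul_zero]; exact IsInt.zero }
    -- recurse on F' = F.erase v₀
    set F' := F.erase v₀ with hF'
    have hsub' : ∀ v ∈ F', v ∈ F := fun v hv => Finset.mem_of_mem_erase hv
    have hgoal' : ∀ v ∈ F', IsInt (2 * c v) := by
      by_cases hne : F'.Nonempty
      · obtain ⟨v₁, hv₁⟩ := hne
        have hNv₁ : N v₁ ≠ 0 := by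
          have := hindep.ne_zero ⟨v₁, hsub' v₁ hv₁⟩
          simpa using this
        obtain ⟨x', hx'⟩ := Function.ne_iff.1 hNv₁
        set g' : Row → ℝ := fun y => g y - c v₀ * N v₀ y with hg'
        have heq' : ∑ v ∈ F', c v • N v = g' := by
          have h2 : ∑ v ∈ F', c v • N v + c v₀ • N v₀ = g := by
            rw [Finset.sum_erase_add F _ hv₀F]; exact heq
          funext y
          have := congrFun h2 y
          simp only [Finset.sum_apply, Pi.add_apply, Pi.smul_apply, smul_eq_mul] at this ⊢
          simp only [hg']
          linarith
        have hindep' : LinearIndependent ℝ (fun v : F' => N v.1) := by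
          have hinj : Function.Injective
              (fun v : F' => (⟨v.1, hsub' v.1 v.2⟩ : {z // z ∈ F})) := by
            intro a b hab
            simp only [Subtype.mk.injEq] at hab
            exact Subtype.ext hab
          exact hindep.comp _ hinj
        have hintg' : ∀ y, (∃ v ∈ F', N v y ≠ 0) → IsInt (g' y) := by
          rintro y ⟨v, hvF', hvy⟩
          by_cases hyx : y = x
          · subst hyx
            exact absurd (honly v (hsub' v hvF') (Finset.ne_of_mem_erase hvF')) hvy
          · exact (hintg y ⟨v, hsub' v hvF', hvy⟩).sub (hcN y hyx)
        have hcov' : ∃ v ∈ F', N v x' ≠ 0 := ⟨v₁, hv₁, hx'⟩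
        have hstruct' : ∀ v ∈ F', (∀ y, IsInt (N v y)) ∧ (∑ y, |N v y|) ≤ 2 :=
          fun v hv => hstruct v (hsub' v hv)
        set n' := F'.card * (F'.card + 1) + (F'.filter fun v => N v x' ≠ 0).card with hn'
        have hlt : n' < n := by
          have hc1 : F'.card = F.card - 1 := Finset.card_erase_of_mem hv₀F
          have hc2 : (F'.filter fun v => N v x' ≠ 0).card ≤ F'.card :=
            Finset.card_filter_le _ _
          have hc3 : 1 ≤ F.card := Finset.card_pos.2 ⟨v₀, hv₀F⟩
          have hc4 : D.card = 1 := hD1.symm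
          obtain ⟨q, hq⟩ : ∃ q, F.card = q + 1 := ⟨F.card - 1, by omega⟩
          have hn : (q + 1) * (q + 2) + 1 ≤ n := by
            rw [hq, hc4] at hmeas; nlinarith [hmeas]
          have : n' ≤ q * (q + 1) + q := by
            have : F'.card = q := by omega
            rw [hn', this]; omega
          nlinarith
        exact IH n' hlt F' N c g' x' hstruct' hindep' heq' hintg' hcov' le_rfl
      · intro v hv; exact absurd ⟨v, hv⟩ hne
    intro v hv
    by_cases hvv : v = v₀
    · subst hvv; exact hc₀
    · exact hgoal' v (Finset.mem_erase.2 ⟨hvv, hv⟩)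
  · -- ===================== |D| ≥ 2 case =====================
    obtain ⟨v₁, hv₁D, v₂, hv₂D, hv12⟩ := Finset.one_lt_card.1 hD2
    have hv₁F : v₁ ∈ F := (Finset.mem_filter.1 hv₁D).1
    have hv₂F : v₂ ∈ F := (Finset.mem_filter.1 hv₂D).1
    have hβ0 : N v₁ x ≠ 0 := (Finset.mem_filter.1 hv₁D).2
    have hα0 : N v₂ x ≠ 0 := (Finset.mem_filter.1 hv₂D).2
    set α := N v₂ x with hα
    set β := N v₁ x with hβ
    obtain ⟨zb, hzb⟩ := (hstruct v₁ hv₁F).1 x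
    obtain ⟨za, hza⟩ := (hstruct v₂ hv₂F).1 x
    have hαabs : (1:ℝ) ≤ |α| := by
      rw [hα, hza]
      have : za ≠ 0 := by intro h; exact hα0 (by rw [hα, hza, h]; norm_num)
      have := Int.one_le_abs this
      calc (1:ℝ) = ((1:ℤ):ℝ) := by norm_num
        _ ≤ ((|za| : ℤ) : ℝ) := by exact_mod_cast this
        _ = |((za:ℤ):ℝ)| := by push_cast; ring
    have hβabs : (1:ℝ) ≤ |β| := by
      rw [hβ, hzb]
      have : zb ≠ 0 := by intro h; exact hβ0 (by rw [hβ, hzb, h]; norm_num)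
      have := Int.one_le_abs this
      calc (1:ℝ) = ((1:ℤ):ℝ) := by norm_num
        _ ≤ ((|zb| : ℤ) : ℝ) := by exact_mod_cast this
        _ = |((zb:ℤ):ℝ)| := by push_cast; ring
    set w : Row → ℝ := fun y => α * N v₁ y - β * N v₂ y with hw
    have hwx : w x = 0 := by rw [hw]; simp only [← hα, ← hβ]; ring
    set N' := Function.update N v₂ w with hN'
    have hN'v : ∀ v, v ≠ v₂ → N' v = N v := fun v hv => Function.update_of_ne hv _ _
    have hN'v₂ : N' v₂ = w := Function.update_self _ _ _
    have hN'v₁ : N' v₁ = N v₁ := hN'v v₁ hv12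
    set c' := Function.update (Function.update c v₂ (-(c v₂)/β)) v₁
        (c v₁ + (α/β) * c v₂) with hc'
    have hc'v₂ : c' v₂ = -(c v₂)/β := by
      rw [hc', Function.update_of_ne (Ne.symm hv12), Function.update_self]
    have hc'v₁ : c' v₁ = c v₁ + (α/β) * c v₂ := by
      rw [hc', Function.update_self]
    have hc'v : ∀ v, v ≠ v₁ → v ≠ v₂ → c' v = c v := by
      intro v h1 h2
      rw [hc', Function.update_of_ne h1, Function.update_of_ne h2]
    -- structure
    have hstruct' : ∀ v ∈ F, (∀ y, IsInt (N' v y)) ∧ (∑ y, |N' v y|) ≤ 2 := by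
      intro v hv
      have hIα : IsInt α := ⟨za, hza⟩
      have hIβ : IsInt β := ⟨zb, hzb⟩
      by_cases hvv : v = v₂
      · rw [hvv, hN'v₂]
        constructor
        · intro y
          rw [hw]
          exact (hIα.mul ((hstruct v₁ hv₁F).1 y)).sub
            (hIβ.mul ((hstruct v₂ hv₂F).1 y))
        · have e1 : ∑ y ∈ Finset.univ.erase x, |N v₁ y| + |N v₁ x| = ∑ y, |N v₁ y| :=
            Finset.sum_erase_add _ _ (Finset.mem_univ x)
          have e2 : ∑ y ∈ Finset.univ.erase x, |N v₂ y| + |N v₂ x| = ∑ y, |N v₂ y| :=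
            Finset.sum_erase_add _ _ (Finset.mem_univ x)
          have e3 : ∑ y ∈ Finset.univ.erase x, |w y| + |w x| = ∑ y, |w y| :=
            Finset.sum_erase_add _ _ (Finset.mem_univ x)
          have hb1 : ∑ y ∈ Finset.univ.erase x, |w y| ≤
              |α| * ∑ y ∈ Finset.univ.erase x, |N v₁ y| +
              |β| * ∑ y ∈ Finset.univ.erase x, |N v₂ y| := by
            rw [Finset.mul_sum, Finset.mul_sum, ← Finset.sum_add_distrib]
            apply Finset.sum_le_sum
            intro y _
            calc |w y| ≤ |α * N v₁ y| + |β * N v₂ y| := by rw [hw]; exact abs_sub _ _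
              _ = |α| * |N v₁ y| + |β| * |N v₂ y| := by rw [abs_mul, abs_mul]
          have h1 := (hstruct v₁ hv₁F).2
          have h2 := (hstruct v₂ hv₂F).2
          have hwx0 : |w x| = 0 := by rw [hwx]; exact abs_zero
          have hβx : |N v₁ x| = |β| := by rw [hβ]
          have hαx : |N v₂ x| = |α| := by rw [hα]
          nlinarith [abs_nonneg α, abs_nonneg β]
      · rw [hN'v v hvv]; exact hstruct v hv
    -- independence
    have hne12' : (⟨v₁, hv₁F⟩ : {z // z ∈ F}) ≠ ⟨v₂, hv₂F⟩ := by
      intro h; exact hv12 (congrArg Subtype.val h)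
    have hindep' : LinearIndependent ℝ (fun v : F => N' v.1) := by
      rw [Fintype.linearIndependent_iff] at hindep ⊢
      intro l hl
      set iv₁ : {z // z ∈ F} := ⟨v₁, hv₁F⟩ with hiv₁
      set iv₂ : {z // z ∈ F} := ⟨v₂, hv₂F⟩ with hiv₂
      set m := Function.update (Function.update l iv₁ (l iv₁ + α * l iv₂)) iv₂
          (-β * l iv₂) with hm
      have hmv₂ : m iv₂ = -β * l iv₂ := by rw [hm, Function.update_self]
      have hmv₁ : m iv₁ = l iv₁ + α * l iv₂ := by
        rw [hm, Function.update_of_ne hne12', Function.update_self]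
      have hmv : ∀ v, v ≠ iv₁ → v ≠ iv₂ → m v = l v := by
        intro v h1 h2
        rw [hm, Function.update_of_ne h2, Function.update_of_ne h1]
      have hdiff : ∑ v : {z // z ∈ F}, (m v • N v.1 - l v • N' v.1) = 0 := by
        rw [sum_eq_add_of_support Finset.univ
          (fun v : {z // z ∈ F} => m v • N v.1 - l v • N' v.1) (Finset.mem_univ iv₁)
          (Finset.mem_univ iv₂) hne12' ?_]
        · funext y
          simp only [Pi.add_apply, Pi.sub_apply, Pi.smul_apply, smul_eq_mul, Pi.zero_apply]
          rw [hmv₁, hmv₂, hN'v₂, hN'v₁, hw]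
          show (l iv₁ + α * l iv₂) * N v₁ y - l iv₁ * N v₁ y +
            (-β * l iv₂ * N v₂ y - l iv₂ * (α * N v₁ y - β * N v₂ y)) = 0
          ring
        · intro v _ h1 h2
          have hvne : v.1 ≠ v₂ := by
            intro h; exact h2 (Subtype.ext h)
          show m v • N (v:ι) - l v • N' (v:ι) = 0
          rw [hmv v h1 h2, hN'v v.1 hvne, sub_self]
      rw [Finset.sum_sub_distrib, hl, sub_zero] at hdiff
      have hm0 := hindep m hdiff
      have hlv₂ : l iv₂ = 0 := by
        have h0 := hm0 iv₂
        rw [hmv₂] at h0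
        rcases mul_eq_zero.1 h0 with h | h
        · exact absurd (neg_eq_zero.1 h) hβ0
        · exact h
      intro v
      by_cases h2 : v = iv₂
      · rw [h2]; exact hlv₂
      by_cases h1 : v = iv₁
      · rw [h1]
        have h0 := hm0 iv₁
        rw [hmv₁, hlv₂] at h0
        simpa using h0
      · have h0 := hm0 v
        rw [hmv v h1 h2] at h0
        exact h0
    -- equation
    have heq' : ∑ v ∈ F, c' v • N' v = g := by
      have hdiff : ∑ v ∈ F, (c' v • N' v - c v • N v) = 0 := by
        rw [sum_eq_add_of_support F (fun v => c' v • N' v - c v • N v) hv₁F hv₂F hv12 ?_]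
        · funext y
          simp only [Pi.add_apply, Pi.sub_apply, Pi.smul_apply, smul_eq_mul, Pi.zero_apply]
          rw [hc'v₁, hc'v₂, hN'v₂, hN'v₁, hw]
          show (c v₁ + α / β * c v₂) * N v₁ y - c v₁ * N v₁ y +
            (-(c v₂) / β * (α * N v₁ y - β * N v₂ y) - c v₂ * N v₂ y) = 0
          field_simp
          ring
        · intro v _ h1 h2
          show c' v • N' v - c v • N v = 0
          rw [hc'v v h1 h2, hN'v v h2, sub_self]
      rw [Finset.sum_sub_distrib, heq] at hdiff
      calc ∑ v ∈ F, c' v • N' v = g + (∑ v ∈ F, c' v • N' v - g) := by abel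
        _ = g := by rw [hdiff, add_zero]
    -- integrality of g on covered rows
    have hintg' : ∀ y, (∃ v ∈ F, N' v y ≠ 0) → IsInt (g y) := by
      rintro y ⟨v, hvF, hvy⟩
      by_cases hvv : v = v₂
      · rw [hvv, hN'v₂] at hvy
        by_cases h1 : N v₁ y ≠ 0
        · exact hintg y ⟨v₁, hv₁F, h1⟩
        · push_neg at h1
          refine hintg y ⟨v₂, hv₂F, ?_⟩
          intro h2
          apply hvy
          show α * N v₁ y - β * N v₂ y = 0
          rw [h1, h2]
          ring
      · rw [hN'v v hvv] at hvy
        exact hintg y ⟨v, hvF, hvy⟩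
    have hcov' : ∃ v ∈ F, N' v x ≠ 0 := ⟨v₁, hv₁F, by rw [hN'v₁]; exact hβ0⟩
    -- measure
    have hfilter : F.filter (fun v => N' v x ≠ 0) = D.erase v₂ := by
      ext v
      constructor
      · intro hv
        obtain ⟨hvF, hvx⟩ := Finset.mem_filter.1 hv
        by_cases hvv : v = v₂
        · subst hvv; rw [hN'v₂, hwx] at hvx; exact absurd rfl hvx
        · rw [hN'v v hvv] at hvx
          exact Finset.mem_erase.2 ⟨hvv, Finset.mem_filter.2 ⟨hvF, hvx⟩⟩
      · intro hv
        obtain ⟨hvv, hvD⟩ := Finset.mem_erase.1 hv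
        obtain ⟨hvF, hvx⟩ := Finset.mem_filter.1 hvD
        exact Finset.mem_filter.2 ⟨hvF, by rw [hN'v v hvv]; exact hvx⟩
    set n' := F.card * (F.card + 1) + (D.erase v₂).card with hn'
    have hcErase : (D.erase v₂).card = D.card - 1 := Finset.card_erase_of_mem hv₂D
    have hlt : n' < n := by
      rw [hn', hcErase]
      have h2 : 2 ≤ D.card := hD2
      generalize hP : F.card * (F.card + 1) = P at hmeas ⊢
      omega
    have hall' := IH n' hlt F N' c' g x hstruct' hindep' heq' hintg' hcov'
      (by rw [hfilter]) 
    -- transfer conclusions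
    intro v hv
    by_cases h2 : v = v₂
    · rw [h2]
      have hkey : 2 * c v₂ = -(zb:ℝ) * (2 * c' v₂) := by
        rw [hc'v₂, ← hzb]
        field_simp
        rfl
      rw [hkey]
      exact ((IsInt.int zb).neg).mul (hall' v₂ hv₂F)
    by_cases h1 : v = v₁
    · rw [h1]
      have hkey : 2 * c v₁ = 2 * c' v₁ + (za:ℝ) * (2 * c' v₂) := by
        rw [hc'v₁, hc'v₂, ← hza]
        field_simp
        ring
      rw [hkey]
      exact (hall' v₁ hv₁F).add ((IsInt.int za).mul (hall' v₂ hv₂F))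
    · rw [← hc'v v h1 h2]
      exact hall' v hv

-- pairing linearity lemmas
lemma pair_smul_left {d : ℕ} (a : ℝ) (x y : Fin d → ℝ) : pairR (a • x) y = a * pairR x y := by
  simp [pairR, Finset.mul_sum, mul_assoc]

lemma pair_add_left {d : ℕ} (x x' y : Fin d → ℝ) :
    pairR (x + x') y = pairR x y + pairR x' y := by
  simp [pairR, add_mul, Finset.sum_add_distrib]

lemma pair_sub_left {d : ℕ} (x x' y : Fin d → ℝ) :
    pairR (x - x') y = pairR x y - pairR x' y := by
  simp [pairR, sub_mul, Finset.sum_sub_distrib]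

lemma pair_sum_left {d : ℕ} {γ : Type*} (A : Finset γ) (f : γ → Fin d → ℝ) (y : Fin d → ℝ) :
    pairR (∑ v ∈ A, f v) y = ∑ v ∈ A, pairR (f v) y := by
  classical
  induction A using Finset.induction with
  | empty => simp [pairR]
  | insert _ _ hx ih =>
    rename_i a s
    rw [Finset.sum_insert hx, Finset.sum_insert hx, pair_add_left, ih]

lemma pair_smul_right {d : ℕ} (a : ℝ) (x y : Fin d → ℝ) : pairR x (a • y) = a * pairR x y := by
  simp [pairR, Finset.mul_sum]; apply Finset.sum_congr rfl; intros; ring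

lemma pair_add_right {d : ℕ} (x y y' : Fin d → ℝ) :
    pairR x (y + y') = pairR x y + pairR x y' := by
  simp [pairR, mul_add, Finset.sum_add_distrib]

lemma pair_sum_right {d : ℕ} {γ : Type*} (A : Finset γ) (x : Fin d → ℝ) (f : γ → Fin d → ℝ) :
    pairR x (∑ v ∈ A, f v) = ∑ v ∈ A, pairR x (f v) := by
  classical
  induction A using Finset.induction with
  | empty => simp [pairR]
  | insert _ _ hx ih =>
    rename_i a s
    rw [Finset.sum_insert hx, Finset.sum_insert hx, pair_add_right, ih]

lemma pair_int {d : ℕ} {x y : Fin d → ℝ} (hx : IsLatticePoint x) (hy : IsLatticePoint y) :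
    IsInt (pairR x y) := by
  apply IsInt.sum
  intro i _
  obtain ⟨z, hz⟩ := hx i
  obtain ⟨w, hw⟩ := hy i
  rw [hz, hw]
  exact (IsInt.int z).mul (IsInt.int w)

set_option maxHeartbeats 3000000 in
/-- With `deg^∨ = (1/2)(s_1 + ⋯ + s_{2r}) + t_1 + ⋯ + t_{k−r}` and
`T = {x ∈ K : ⟨x, s_i⟩ = ⟨x, t_j⟩ = 1 ∀ i, j} − deg`, the dilated polytope
`2T = {2x : x ∈ T}` is the convex hull of a finite set of lattice points. -/
theorem stmt16 {d k r : ℕ} (hrk : r ≤ k) (K : Set (Fin d → ℝ)) (deg degVee : Fin d → ℝ)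
    (hK : IsGorensteinCone K degVee) (hKv : IsGorensteinCone (dualCone K) deg)
    (hk : pairR deg degVee = (k : ℝ))
    (s : Fin (2 * r) → (Fin d → ℝ)) (t : Fin (k - r) → (Fin d → ℝ))
    (hs : ∀ i, s i ∈ KvOne K deg) (ht : ∀ j, t j ∈ KvOne K deg)
    (hli : LinearIndependent ℝ (Sum.elim s t))
    (hdec : degVee = (2⁻¹ : ℝ) • (∑ i, s i) + ∑ j, t j)
    (T : Set (Fin d → ℝ))
    (hT : T = (fun x => x - deg) ''
      { x | x ∈ K ∧ (∀ i, pairR x (s i) = 1) ∧ (∀ j, pairR x (t j) = 1) }) :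
    ∃ V : Finset (Fin d → ℝ), (∀ v ∈ V, IsLatticePoint v) ∧
      (2 : ℝ) • T = convexHull ℝ (V : Set (Fin d → ℝ)) := by
  classical
  obtain ⟨hdegVeeLat, ⟨S, hSprop, hKeq⟩, hKpt, hKsp⟩ := hK
  obtain ⟨hdegLat, -, -, -⟩ := hKv
  -- the linear map from coefficient space
  set Llin : ({v // v ∈ S} → ℝ) →ₗ[ℝ] (Fin d → ℝ) :=
    { toFun := fun c => ∑ v : {v // v ∈ S}, c v • (v : Fin d → ℝ)
      map_add' := by
        intro c c'
        simp [add_smul, Finset.sum_add_distrib]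
      map_smul' := by
        intro a c
        simp [Finset.smul_sum, smul_smul] } with hLlin
  set C : Set ({v // v ∈ S} → ℝ) :=
    {c | (∀ v, 0 ≤ c v) ∧ (∀ i, pairR (Llin c) (s i) = 1) ∧
      (∀ j, pairR (Llin c) (t j) = 1)} with hCdef
  -- generators are in K
  have hvK : ∀ v : {v // v ∈ S}, (v : Fin d → ℝ) ∈ K := by
    intro v
    rw [hKeq]
    refine ⟨fun u => if u = (v : Fin d → ℝ) then 1 else 0, fun u => by positivity, ?_⟩
    simp [ite_smul, Finset.sum_ite_eq', v.2]
  -- expansion of pairing with Llin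
  have hLpair : ∀ (c : {v // v ∈ S} → ℝ) (y : Fin d → ℝ),
      pairR (Llin c) y = ∑ v : {v // v ∈ S}, c v * pairR (v : Fin d → ℝ) y := by
    intro c y
    show pairR (∑ v : {v // v ∈ S}, c v • (v : Fin d → ℝ)) y = _
    rw [pair_sum_left]
    exact Finset.sum_congr rfl fun v _ => pair_smul_left _ _ _
  -- sum of coefficients is k on C
  have hsumk : ∀ c ∈ C, ∑ v : {v // v ∈ S}, c v = (k : ℝ) := by
    intro c hc
    obtain ⟨hc0, hcs, hct⟩ := hc
    have h1 : pairR (Llin c) degVee = ∑ v : {v // v ∈ S}, c v := by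
      rw [hLpair]
      apply Finset.sum_congr rfl
      intro v _
      rw [(hSprop v.1 v.2).2, mul_one]
    have h2 : pairR (Llin c) degVee = (k : ℝ) := by
      rw [hdec, pair_add_right, pair_smul_right, pair_sum_right, pair_sum_right]
      have e1 : ∑ i, pairR (Llin c) (s i) = (2 * r : ℕ) := by
        rw [Finset.sum_congr rfl fun i _ => hcs i]
        simp
      have e2 : ∑ j, pairR (Llin c) (t j) = (k - r : ℕ) := by
        rw [Finset.sum_congr rfl fun j _ => hct j]
        simp
      rw [e1, e2]
      have : ((k - r : ℕ) : ℝ) = (k : ℝ) - (r : ℝ) := by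
        rw [Nat.cast_sub hrk]
      rw [this]
      push_cast
      ring
    rw [← h1, h2]
  -- the feasible region maps onto the polytope
  have hPL : { x | x ∈ K ∧ (∀ i, pairR x (s i) = 1) ∧ (∀ j, pairR x (t j) = 1) }
      = Llin '' C := by
    ext x
    constructor
    · rintro ⟨hxK, hxs, hxt⟩
      rw [hKeq] at hxK
      obtain ⟨c, hc0, hcx⟩ := hxK
      have hx : x = Llin (fun v : {v // v ∈ S} => c v.1) := by
        rw [hcx]
        show _ = ∑ v : {v // v ∈ S}, c v.1 • (v : Fin d → ℝ)
        rw [Finset.sum_coe_sort S (fun v => c v • v)]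
      exact ⟨fun v => c v.1, ⟨fun v => hc0 v.1, fun i => by rw [← hx]; exact hxs i,
        fun j => by rw [← hx]; exact hxt j⟩, hx.symm⟩
    · rintro ⟨c, ⟨hc0, hcs, hct⟩, rfl⟩
      refine ⟨?_, hcs, hct⟩
      rw [hKeq]
      refine ⟨fun u => if h : u ∈ S then c ⟨u, h⟩ else 0, fun u => ?_, ?_⟩
      · dsimp only
        split
        · exact hc0 _
        · exact le_rfl
      · show Llin c = _
        rw [← Finset.sum_coe_sort S (fun u => (if h : u ∈ S then c ⟨u, h⟩ else 0) • u)]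
        show (∑ v : {v // v ∈ S}, c v • (v : Fin d → ℝ)) = _
        apply Finset.sum_congr rfl
        intro v _
        rw [dif_pos v.2]
    -- convexity of C

  have hCconv : Convex ℝ C := by
    intro c1 h1 c2 h2 a b ha hb hab
    obtain ⟨h10, h1s, h1t⟩ := h1
    obtain ⟨h20, h2s, h2t⟩ := h2
    refine ⟨fun v => by
      have := h10 v; have := h20 v
      have : 0 ≤ a * c1 v + b * c2 v := by positivity
      simpa using this, fun i => ?_, fun j => ?_⟩
    · rw [map_add, map_smul, map_smul, pair_add_left, pair_smul_left, pair_smul_left,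
        h1s i, h2s i]
      simpa using hab
    · rw [map_add, map_smul, map_smul, pair_add_left, pair_smul_left, pair_smul_left,
        h1t j, h2t j]
      simpa using hab
  -- upper bound on coordinates
  have hub : ∀ c ∈ C, ∀ v, c v ≤ (k : ℝ) := by
    intro c hc v
    have h1 : c v ≤ ∑ u : {v // v ∈ S}, c u :=
      Finset.single_le_sum (f := fun u => c u) (fun u _ => hc.1 u) (Finset.mem_univ v)
    rw [hsumk c hc] at h1
    exact h1
  -- compactness of C
  have hCcomp : IsCompact C := by
    have hcont : ∀ y : Fin d → ℝ, Continuous fun c : {v // v ∈ S} → ℝ => pairR (Llin c) y := by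
      intro y
      have hfe : (fun c : {v // v ∈ S} → ℝ => pairR (Llin c) y)
          = fun c => ∑ v : {v // v ∈ S}, c v * pairR (v : Fin d → ℝ) y :=
        funext fun c => hLpair c y
      rw [hfe]
      exact continuous_finset_sum _ fun v _ => (continuous_apply v).mul continuous_const
    have hsubIcc : C ⊆ Set.Icc (0 : {v // v ∈ S} → ℝ) (fun _ => (k : ℝ)) := by
      intro c hc
      constructor
      · intro v; exact hc.1 v
      · intro v; exact hub c hc v
    have hclosed : IsClosed C := by
      rw [hCdef]
      rw [show {c : {v // v ∈ S} → ℝ | (∀ v, 0 ≤ c v) ∧ (∀ i, pairR (Llin c) (s i) = 1) ∧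
          (∀ j, pairR (Llin c) (t j) = 1)}
        = {c : {v // v ∈ S} → ℝ | ∀ v, 0 ≤ c v} ∩
          ({c | ∀ i, pairR (Llin c) (s i) = 1} ∩ {c | ∀ j, pairR (Llin c) (t j) = 1}) from rfl]
      refine IsClosed.inter ?_ (IsClosed.inter ?_ ?_)
      · rw [Set.setOf_forall]
        exact isClosed_iInter fun v => isClosed_le continuous_const (continuous_apply v)
      · rw [Set.setOf_forall]
        exact isClosed_iInter fun i => isClosed_eq (hcont (s i)) continuous_const
      · rw [Set.setOf_forall]
        exact isClosed_iInter fun j => isClosed_eq (hcont (t j)) continuous_const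
    exact IsCompact.of_isClosed_subset isCompact_Icc hclosed hsubIcc
  -- the matrix of columns
  set Ncol : {v // v ∈ S} → (Fin (2 * r) ⊕ Fin (k - r)) → ℝ :=
    fun v => Sum.elim (fun i => pairR (v : Fin d → ℝ) (s i))
      (fun j => pairR (v : Fin d → ℝ) (t j)) with hNcol
  have hidAll : ∀ v : {v // v ∈ S},
      ∑ i, pairR (v : Fin d → ℝ) (s i) + 2 * ∑ j, pairR (v : Fin d → ℝ) (t j) = 2 := by
    intro v
    have h1 : pairR (v : Fin d → ℝ) degVee = 1 := (hSprop v.1 v.2).2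
    rw [hdec, pair_add_right, pair_smul_right, pair_sum_right, pair_sum_right] at h1
    linarith
  have hcolstruct : ∀ v : {v // v ∈ S},
      (∀ y, IsInt (Ncol v y)) ∧ (∑ y, |Ncol v y|) ≤ 2 := by
    intro v
    have hvlat := (hSprop v.1 v.2).1
    have hnns : ∀ i, 0 ≤ pairR (v : Fin d → ℝ) (s i) := fun i => (hs i).2.1 _ (hvK v)
    have hnnt : ∀ j, 0 ≤ pairR (v : Fin d → ℝ) (t j) := fun j => (ht j).2.1 _ (hvK v)
    constructor
    · intro y
      cases y with
      | inl i => exact pair_int hvlat (hs i).1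
      | inr j => exact pair_int hvlat (ht j).1
    · rw [Fintype.sum_sum_type]
      have e1 : ∑ i, |Ncol v (Sum.inl i)| = ∑ i, pairR (v : Fin d → ℝ) (s i) :=
        Finset.sum_congr rfl fun i _ => abs_of_nonneg (hnns i)
      have e2 : ∑ j, |Ncol v (Sum.inr j)| = ∑ j, pairR (v : Fin d → ℝ) (t j) :=
        Finset.sum_congr rfl fun j _ => abs_of_nonneg (hnnt j)
      rw [e1, e2]
      have h3 : 0 ≤ ∑ j, pairR (v : Fin d → ℝ) (t j) :=
        Finset.sum_nonneg fun j _ => hnnt j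
      linarith [hidAll v]
  -- extreme points of C are half-integral
  have hExtInt : ∀ e ∈ Set.extremePoints ℝ C, ∀ v : {v // v ∈ S}, IsInt (2 * e v) := by
    intro e he
    obtain ⟨he0, hes, het⟩ := he.1
    set F : Finset {v // v ∈ S} := Finset.univ.filter (fun v => e v ≠ 0) with hF
    have hoff : ∀ v : {v // v ∈ S}, v ∉ F → e v = 0 := by
      intro v hv
      by_contra h
      exact hv (Finset.mem_filter.2 ⟨Finset.mem_univ v, h⟩)
    by_cases hFne : F.Nonempty
    · -- the equation
      have heqB : ∑ v ∈ F, e v • Ncol v = fun _ => (1 : ℝ) := by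
        have hfull : ∑ v ∈ F, e v • Ncol v = ∑ v : {v // v ∈ S}, e v • Ncol v := by
          apply Finset.sum_subset (Finset.subset_univ F)
          intro v _ hv
          rw [hoff v hv, zero_smul]
        rw [hfull]
        funext y
        rw [Finset.sum_apply]
        cases y with
        | inl i =>
          have h1 := hes i
          rw [hLpair] at h1
          exact h1
        | inr j =>
          have h1 := het j
          rw [hLpair] at h1
          exact h1
      -- linear independence of support columns
      have hindepB : LinearIndependent ℝ (fun v : F => Ncol v.1) := by
        by_contra hnot
        rw [Fintype.not_linearIndependent_iff] at hnot
        obtain ⟨l, hl, w, hw⟩ := hnot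
        set lam : {v // v ∈ S} → ℝ := fun v => if h : v ∈ F then l ⟨v, h⟩ else 0 with hlam
        have hlamF : ∀ (v) (h : v ∈ F), lam v = l ⟨v, h⟩ := fun v h => dif_pos h
        have hlam0 : ∀ v, v ∉ F → lam v = 0 := fun v h => dif_neg h
        have hrow0 : ∀ y, ∑ v : {v // v ∈ S}, lam v * Ncol v y = 0 := by
          intro y
          have h1 : ∑ v : {v // v ∈ S}, lam v * Ncol v y = ∑ v ∈ F, lam v * Ncol v y := by
            symm
            apply Finset.sum_subset (Finset.subset_univ F)
            intro v _ hv
            rw [hlam0 v hv, zero_mul]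
          have h2 : ∑ v ∈ F, lam v * Ncol v y = ∑ v : {w // w ∈ F}, l v * Ncol v.1 y := by
            rw [← Finset.sum_coe_sort F (fun v => lam v * Ncol v y)]
            apply Finset.sum_congr rfl
            intro v _
            rw [hlamF v.1 v.2]
          rw [h1, h2]
          have h3 := congrFun hl y
          rw [Finset.sum_apply] at h3
          exact h3
        have hpairlam : ∀ y : Fin d → ℝ,
            (∑ v : {v // v ∈ S}, lam v * pairR (v : Fin d → ℝ) y = 0) →
            pairR (Llin lam) y = 0 := by
          intro y hy
          rw [hLpair]
          exact hy
        have hps : ∀ i, pairR (Llin lam) (s i) = 0 :=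
          fun i => hpairlam (s i) (hrow0 (Sum.inl i))
        have hpt : ∀ j, pairR (Llin lam) (t j) = 0 :=
          fun j => hpairlam (t j) (hrow0 (Sum.inr j))
        -- choose epsilon
        have hFim : (F.image (fun v => e v / (|lam v| + 1))).Nonempty := hFne.image _
        set ε := (F.image (fun v => e v / (|lam v| + 1))).min' hFim with hε
        have hεpos : 0 < ε := by
          obtain ⟨v, hvF, hveq⟩ :=
            Finset.mem_image.1 ((F.image (fun v => e v / (|lam v| + 1))).min'_mem hFim)
          rw [hε, ← hveq]
          have hev : 0 < e v := by
            have h1 := he0 v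
            have h2 : e v ≠ 0 := (Finset.mem_filter.1 hvF).2
            exact h1.lt_of_ne' h2
          positivity
        have hbound : ∀ v ∈ F, ε * |lam v| ≤ e v := by
          intro v hv
          have h1 : ε ≤ e v / (|lam v| + 1) :=
            Finset.min'_le _ _ (Finset.mem_image_of_mem _ hv)
          have h2 : (0 : ℝ) < |lam v| + 1 := by positivity
          have h3 : ε * (|lam v| + 1) ≤ e v := (le_div_iff₀ h2).1 h1
          nlinarith [abs_nonneg (lam v), hεpos]
        have hbound' : ∀ v, ε * |lam v| ≤ e v := by
          intro v
          by_cases hv : v ∈ F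
          · exact hbound v hv
          · rw [hlam0 v hv]
            simpa using he0 v
        -- perturbations stay in C
        have hmemp : e + ε • lam ∈ C := by
          refine ⟨fun v => ?_, fun i => ?_, fun j => ?_⟩
          · show 0 ≤ e v + (ε • lam) v
            have h1 := hbound' v
            have h2 : -(|lam v|) ≤ lam v := neg_abs_le (lam v)
            have h3 : (ε • lam) v = ε * lam v := rfl
            nlinarith [hεpos]
          · rw [map_add, map_smul, pair_add_left, pair_smul_left, hes i, hps i]
            ring
          · rw [map_add, map_smul, pair_add_left, pair_smul_left, het j, hpt j]
            ring
        have hmemm : e - ε • lam ∈ C := by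
          refine ⟨fun v => ?_, fun i => ?_, fun j => ?_⟩
          · show 0 ≤ e v - (ε • lam) v
            have h1 := hbound' v
            have h2 : lam v ≤ |lam v| := le_abs_self (lam v)
            have h3 : (ε • lam) v = ε * lam v := rfl
            nlinarith [hεpos]
          · rw [map_sub, map_smul, pair_sub_left, pair_smul_left, hes i, hps i]
            ring
          · rw [map_sub, map_smul, pair_sub_left, pair_smul_left, het j, hpt j]
            ring
        -- contradiction with extremality
        have hmid : e ∈ openSegment ℝ (e - ε • lam) (e + ε • lam) := by
          refine ⟨1/2, 1/2, by norm_num, by norm_num, by norm_num, ?_⟩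
          module
        have hcon := he.2 hmemm hmemp hmid
        have hzero : ε • lam = 0 := by
          have h1 : e - ε • lam = e := hcon
          rwa [sub_eq_self] at h1
        have hlw : lam w.1 = 0 := by
          have h1 := congrFun hzero w.1
          have h2 : ε * lam w.1 = 0 := h1
          rcases mul_eq_zero.1 h2 with h | h
          · exact absurd h (ne_of_gt hεpos)
          · exact h
        rw [hlamF w.1 w.2] at hlw
        exact hw hlw
      -- cover
      obtain ⟨v₁, hv₁⟩ := hFne
      have hcovx : ∃ y, Ncol v₁ y ≠ 0 := by
        by_contra hno
        push_neg at hno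
        have h1 : ∑ i, pairR (v₁ : Fin d → ℝ) (s i) = 0 := by
          apply Finset.sum_eq_zero
          intro i _
          exact hno (Sum.inl i)
        have h2 : ∑ j, pairR (v₁ : Fin d → ℝ) (t j) = 0 := by
          apply Finset.sum_eq_zero
          intro j _
          exact hno (Sum.inr j)
        have h3 := hidAll v₁
        rw [h1, h2] at h3
        norm_num at h3
      obtain ⟨x₀, hx₀⟩ := hcovx
      have hconc := keyB (F.card * (F.card + 1) + (F.filter fun v => Ncol v x₀ ≠ 0).card)
        F Ncol e (fun _ => 1) x₀ (fun v _ => hcolstruct v) hindepB heqB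
        (fun y _ => IsInt.one) ⟨v₁, hv₁, hx₀⟩ le_rfl
      intro v
      by_cases hv : v ∈ F
      · exact hconc v hv
      · rw [hoff v hv, mul_zero]
        exact IsInt.zero
    · intro v
      have h1 : e v = 0 := by
        by_contra h
        exact hFne ⟨v, Finset.mem_filter.2 ⟨Finset.mem_univ v, h⟩⟩
      rw [h1, mul_zero]
      exact IsInt.zero
  -- the set of half-integral points of C
  set V₀ : Set ({v // v ∈ S} → ℝ) := {c ∈ C | ∀ v, IsInt (2 * c v)} with hV₀def
  have hV₀fin : V₀.Finite := by
    have hsub : V₀ ⊆ Set.pi Set.univ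
        (fun _ : {v // v ∈ S} => (fun z : ℤ => (z : ℝ) / 2) '' (Set.Icc (0 : ℤ) (2 * k))) := by
      intro c hc v _
      obtain ⟨z, hz⟩ := hc.2 v
      refine ⟨z, ⟨?_, ?_⟩, by show (z : ℝ) / 2 = c v; rw [← hz]; ring⟩
      · have h0 : 0 ≤ c v := hc.1.1 v
        have : (0 : ℝ) ≤ (z : ℝ) := by rw [← hz]; linarith
        exact_mod_cast this
      · have h1 : c v ≤ (k : ℝ) := hub c hc.1 v
        have : (z : ℝ) ≤ ((2 * k : ℤ) : ℝ) := by push_cast; linarith [hz]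
        exact_mod_cast this
    exact Set.Finite.subset (Set.Finite.pi fun _ => (Set.finite_Icc _ _).image _) hsub
  have hCV₀ : C = convexHull ℝ V₀ := by
    have hsub : convexHull ℝ V₀ ⊆ C := convexHull_min (fun c hc => hc.1) hCconv
    refine le_antisymm ?_ hsub
    have hKM := closure_convexHull_extremePoints hCcomp hCconv
    have hext : Set.extremePoints ℝ C ⊆ V₀ := by
      intro e he
      exact ⟨he.1, hExtInt e he⟩
    calc C = closure (convexHull ℝ (Set.extremePoints ℝ C)) := hKM.symm
      _ ⊆ closure (convexHull ℝ V₀) := closure_mono (convexHull_mono hext)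
      _ = convexHull ℝ V₀ := (hV₀fin.isClosed_convexHull (𝕜 := ℝ)).closure_eq
  -- the affine map
  set A : ({v // v ∈ S} → ℝ) →ᵃ[ℝ] (Fin d → ℝ) :=
    { toFun := fun c => (2 : ℝ) • Llin c - (2 : ℝ) • deg
      linear := (2 : ℝ) • Llin
      map_vadd' := by
        intro p v
        show (2 : ℝ) • Llin (v + p) - (2 : ℝ) • deg = ((2 : ℝ) • Llin) v +ᵥ _
        rw [map_add, smul_add]
        show _ = (2 : ℝ) • Llin v + ((2 : ℝ) • Llin p - (2 : ℝ) • deg)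
        abel } with hA
  -- 2T is the image of C under A
  have h2T : (2 : ℝ) • T = A '' C := by
    rw [hT, hPL]
    rw [← Set.image_smul]
    rw [Set.image_image, Set.image_image]
    apply Set.image_congr
    intro c _
    show (2 : ℝ) • (Llin c - deg) = (2 : ℝ) • Llin c - (2 : ℝ) • deg
    rw [smul_sub]
  -- conclude
  have hAfin : (A '' V₀).Finite := hV₀fin.image A
  refine ⟨hAfin.toFinset, ?_, ?_⟩
  · intro v hv
    rw [Set.Finite.mem_toFinset] at hv
    obtain ⟨c, hc, rfl⟩ := hv
    intro i
    show IsInt (((2 : ℝ) • Llin c - (2 : ℝ) • deg) i)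
    have h1 : ((2 : ℝ) • Llin c - (2 : ℝ) • deg) i
        = ∑ v : {v // v ∈ S}, (2 * c v) * (v : Fin d → ℝ) i - 2 * deg i := by
      show (2 : ℝ) * (Llin c) i - 2 * deg i = _
      have : (Llin c) i = ∑ v : {v // v ∈ S}, c v * (v : Fin d → ℝ) i := by
        show (∑ v : {v // v ∈ S}, c v • (v : Fin d → ℝ)) i = _
        rw [Finset.sum_apply]
        rfl
      rw [this, Finset.mul_sum]
      congr 1
      apply Finset.sum_congr rfl
      intros; ring
    rw [h1]
    apply IsInt.sub
    · apply IsInt.sum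
      intro v _
      apply IsInt.mul (hc.2 v)
      obtain ⟨z, hz⟩ := (hSprop v.1 v.2).1 i
      exact ⟨z, hz⟩
    · obtain ⟨z, hz⟩ := hdegLat i
      rw [hz]
      exact (IsInt.int 2).mul (IsInt.int z)
  · rw [h2T, hCV₀, AffineMap.image_convexHull, Set.Finite.coe_toFinset]
end
end
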